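/- Let n ≥ 1 and a, b ≥ 1. Then the set of K^{a,b}_{n+1}-parking functions equals the set of x-parking functions for x = (a, b, b, …, b) ∈ ℕ^n. -/
import Mathlib


/-- `deg^G_U(i) = ∑_{j ∉ U} ω(i,j)`. -/
def degOut {n : ℕ} (ω : Fin (n + 1) → Fin (n + 1) → ℕ) (U : Finset (Fin (n + 1)))
    (i : Fin (n + 1)) : ℕ :=
  ∑ j ∈ Uᶜ, ω i j

/-- `α` is a `G`-parking function (the nonroot vertex `i+1` carries value `α i`). -/
def IsGPF (n : ℕ) (ω : Fin (n + 1) → Fin (n + 1) → ℕ) (α : Fin n → ℕ) : Prop :=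
  ∀ U : Finset (Fin (n + 1)), U.Nonempty → (0 : Fin (n + 1)) ∉ U →
    ∃ i : Fin n, i.succ ∈ U ∧ α i + 1 ≤ degOut ω U i.succ

/-- `α` is an `x`-parking function of length `n` (`x` given 0-based: `x k` is `x_{k+1}`). -/
def IsVPF (n : ℕ) (x : ℕ → ℕ) (α : Fin n → ℕ) : Prop :=
  ∀ j : Fin n, (j : ℕ) + 1 ≤
    (Finset.univ.filter fun i => α i < ∑ k ∈ Finset.range ((j : ℕ) + 1), x k).card

/-- The edge-weight function of `K^{a,b}_{n+1}`: weight `a` on edges at `0`, weight `b`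
elsewhere. -/
def omegaK (n a b : ℕ) : Fin (n + 1) → Fin (n + 1) → ℕ :=
  fun i j => if i = j then 0 else if i = 0 ∨ j = 0 then a else b

lemma sum_x (a b j : ℕ) :
    ∑ k ∈ Finset.range (j + 1), (if k = 0 then a else b) = a + b * j := by
  rw [Finset.sum_range_succ']
  simp [mul_comm]
  omega

lemma degOut_omegaK (n a b : ℕ) (U : Finset (Fin (n + 1))) (h0 : (0 : Fin (n + 1)) ∉ U)
    (i : Fin n) (hi : i.succ ∈ U) :
    degOut (omegaK n a b) U i.succ = a + b * (n - U.card) := by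
  unfold degOut
  have h0c : (0 : Fin (n + 1)) ∈ Uᶜ := Finset.mem_compl.2 h0
  rw [← Finset.insert_erase h0c, Finset.sum_insert (Finset.notMem_erase _ _)]
  have h1 : omegaK n a b i.succ 0 = a := by
    simp [omegaK, Fin.succ_ne_zero]
  have h2 : ∀ j ∈ (Uᶜ).erase 0, omegaK n a b i.succ j = b := by
    intro j hj
    have hj0 : j ≠ 0 := Finset.ne_of_mem_erase hj
    have hjc : j ∈ Uᶜ := Finset.mem_of_mem_erase hj
    have hne : i.succ ≠ j := by
      rintro rfl; exact (Finset.mem_compl.1 hjc) hi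
    simp [omegaK, hne, hj0, Fin.succ_ne_zero]
  rw [Finset.sum_congr rfl h2, Finset.sum_const, h1]
  have hcard : ((Uᶜ).erase 0).card = n - U.card := by
    rw [Finset.card_erase_of_mem h0c, Finset.card_compl]
    simp
    omega
  rw [hcard, smul_eq_mul, mul_comm]

/-- The `K^{a,b}_{n+1}`-parking functions are exactly the `(a,b,b,…,b)`-parking functions. -/
theorem stmt9 (n : ℕ) (hn : 1 ≤ n) (a b : ℕ) (ha : 1 ≤ a) (hb : 1 ≤ b) :
    {α : Fin n → ℕ | IsGPF n (omegaK n a b) α} =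
      {α : Fin n → ℕ | IsVPF n (fun k => if k = 0 then a else b) α} := by
  ext α
  simp only [Set.mem_setOf_eq]
  constructor
  · -- GPF → VPF
    intro hG j
    rw [sum_x]
    by_contra hcon
    push_neg at hcon
    set S : Finset (Fin n) := Finset.univ.filter fun i => α i < a + b * (j : ℕ) with hS
    set T : Finset (Fin n) := Finset.univ.filter fun i => ¬ α i < a + b * (j : ℕ) with hT
    have hST : S.card + T.card = n := by
      rw [hS, hT, Finset.card_filter_add_card_filter_not]
      simp
    have hjn : (j : ℕ) < n := j.isLt
    have hSj : S.card ≤ (j : ℕ) := by omega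
    have hTn : 1 ≤ T.card ∧ n - T.card ≤ (j : ℕ) := by omega
    have hTne : T.Nonempty := Finset.card_pos.1 hTn.1
    set U : Finset (Fin (n + 1)) := T.image Fin.succ with hU
    have hUne : U.Nonempty := hTne.image _
    have hU0 : (0 : Fin (n + 1)) ∉ U := by
      simp only [hU, Finset.mem_image]
      rintro ⟨i, -, hi⟩
      exact Fin.succ_ne_zero i hi
    obtain ⟨i, hiU, hdeg⟩ := hG U hUne hU0
    rw [degOut_omegaK n a b U hU0 i hiU] at hdeg
    have hUcard : U.card = T.card := Finset.card_image_of_injective _ (Fin.succ_injective n)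
    have hiT : i ∈ T := by
      rw [hU] at hiU
      obtain ⟨i', hi'T, hi'⟩ := Finset.mem_image.1 hiU
      rwa [Fin.succ_injective n hi'] at hi'T
    have hαi : ¬ α i < a + b * (j : ℕ) := (Finset.mem_filter.1 hiT).2
    have hmono : b * (n - U.card) ≤ b * (j : ℕ) := by
      apply Nat.mul_le_mul_left
      omega
    omega
  · -- VPF → GPF
    intro hV U hUne hU0
    have hm1 : 1 ≤ U.card := Finset.card_pos.2 hUne
    set T : Finset (Fin n) := Finset.univ.filter fun i => i.succ ∈ U with hT
    have hUT : U = T.image Fin.succ := by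
      ext u
      simp only [hT, Finset.mem_image, Finset.mem_filter, Finset.mem_univ, true_and]
      constructor
      · intro hu
        have hu0 : u ≠ 0 := by rintro rfl; exact hU0 hu
        obtain ⟨i, rfl⟩ := Fin.exists_succ_eq.2 hu0
        exact ⟨i, hu, rfl⟩
      · rintro ⟨i, hi, rfl⟩; exact hi
    have hTcard : T.card = U.card := by
      rw [hUT, Finset.card_image_of_injective _ (Fin.succ_injective n)]
    have hmn : U.card ≤ n := by
      rw [← hTcard]
      simpa using Finset.card_le_card (Finset.subset_univ T)
    have hjlt : n - U.card < n := by omega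
    have hVj := hV ⟨n - U.card, hjlt⟩
    rw [sum_x] at hVj
    simp only at hVj
    set S : Finset (Fin n) := Finset.univ.filter fun i => α i < a + b * (n - U.card) with hS
    by_contra hcon
    push_neg at hcon
    have hsub : S ⊆ Tᶜ := by
      intro i hi
      have hαi : α i < a + b * (n - U.card) := (Finset.mem_filter.1 hi).2
      rw [Finset.mem_compl, hT, Finset.mem_filter]
      rintro ⟨-, hiU⟩
      have := hcon i hiU
      rw [degOut_omegaK n a b U hU0 i hiU] at this
      omega
    have hSc : S.card ≤ n - U.card := by
      calc S.card ≤ Tᶜ.card := Finset.card_le_card hsub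
        _ = n - T.card := by rw [Finset.card_compl]; simp
        _ = n - U.card := by rw [hTcard]
    omega
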